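/- Let A be an n×n real matrix with n distinct negative real eigenvalues λ_1, ..., λ_n, diagonalized as A = P diag(λ_1,...,λ_n) P^{−1}, and let b ∈ ℝ^n with P^{−1} b = (β_1, ..., β_n)^T. Then the infinite-horizon controllability Gramian G_∞ = ∫_0^∞ e^{At} b b^T e^{A^T t} dt satisfies det(G_∞) = det(P)^2 · det(M), where M is the n×n matrix with entries M_{ij} = −β_i β_j / (λ_i + λ_j), and det(M) = (∏_i β_i^2) · ∏_{i<j} (λ_i − λ_j)^2 / ∏_{i,j} (−(λ_i + λ_j)) by the Cauchy determinant formula. -/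

import Mathlib

open Matrix MeasureTheory Finset

section helpers

lemma integrableOn_exp_mul {c : ℝ} (hc : c < 0) :
    IntegrableOn (fun t : ℝ => Real.exp (c * t)) (Set.Ioi 0) := by
  simpa using exp_neg_integrableOn_Ioi 0 (b := -c) (by linarith)

lemma my_integral_exp_mul_Ioi {c : ℝ} (hc : c < 0) :
    ∫ t in Set.Ioi (0 : ℝ), Real.exp (c * t) = -(1 / c) := by
  have hderiv : ∀ x ∈ Set.Ici (0 : ℝ),
      HasDerivAt (fun t => Real.exp (c * t) / c) (Real.exp (c * x)) x := by
    intro x _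
    have h1 : HasDerivAt (fun t : ℝ => c * t) c x := by
      simpa using (hasDerivAt_id x).const_mul c
    have := (h1.exp).div_const c
    simpa [mul_div_assoc, div_self hc.ne] using this
  have htend : Filter.Tendsto (fun t => Real.exp (c * t) / c) Filter.atTop (nhds 0) := by
    have h2 : Filter.Tendsto (fun t : ℝ => c * t) Filter.atTop Filter.atBot :=
      Filter.tendsto_id.const_mul_atTop_of_neg hc
    simpa using (Real.tendsto_exp_atBot.comp h2).div_const c
  have := integral_Ioi_of_hasDerivAt_of_tendsto' hderiv (integrableOn_exp_mul hc) htend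
  simpa using this

variable {m n k : Type*} [Fintype n]

lemma my_mul_vecMulVec (M : Matrix m n ℝ) (u : n → ℝ) (v : k → ℝ) :
    M * Matrix.vecMulVec u v = Matrix.vecMulVec (M *ᵥ u) v := by
  ext i j
  simp [Matrix.mul_apply, Matrix.vecMulVec_apply, Matrix.mulVec, dotProduct,
    Finset.sum_mul, mul_assoc]

lemma my_vecMulVec_mul (u : m → ℝ) (v : n → ℝ) (M : Matrix n k ℝ) :
    Matrix.vecMulVec u v * M = Matrix.vecMulVec u (v ᵥ* M) := by
  ext i j
  simp [Matrix.mul_apply, Matrix.vecMulVec_apply, Matrix.vecMul, dotProduct,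
    Finset.mul_sum, mul_assoc]

end helpers

open Polynomial in
lemma cauchy_det {N : ℕ} (a b : Fin N → ℝ) (hb : Function.Injective b)
    (hab : ∀ i j, a i - b j ≠ 0) :
    (Matrix.of fun i j : Fin N => 1 / (a i - b j)).det
      = (∏ i : Fin N, ∏ j ∈ Finset.Ioi i, ((a j - a i) * (b i - b j)))
        / ∏ i : Fin N, ∏ j : Fin N, (a i - b j) := by
  rcases Nat.eq_zero_or_pos N with rfl | hN
  · simp [Matrix.det_fin_zero]
  set p : Fin N → ℝ[X] := fun j => ∏ m ∈ Finset.univ.erase j, (X - C (b m)) with hp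
  set S : Matrix (Fin N) (Fin N) ℝ := Matrix.of (fun k j : Fin N => (p j).coeff k) with hS
  have hdeg : ∀ j, (p j).natDegree < N := by
    intro j
    have h1 : (p j).natDegree = ∑ m ∈ Finset.univ.erase j, ((X : ℝ[X]) - C (b m)).natDegree :=
      natDegree_prod_of_monic _ _ (fun m _ => monic_X_sub_C (b m))
    have h2 : (p j).natDegree = (Finset.univ.erase j).card := by
      simp [h1, natDegree_X_sub_C]
    rw [h2, Finset.card_erase_of_mem (Finset.mem_univ j), Finset.card_univ, Fintype.card_fin]
    omega
  have heval : ∀ (x : ℝ) (j : Fin N), (∑ k : Fin N, x ^ (k : ℕ) * S k j) = (p j).eval x := by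
    intro x j
    rw [eval_eq_sum_range' (hdeg j) x, ← Fin.sum_univ_eq_sum_range]
    exact Finset.sum_congr rfl fun k _ => by rw [mul_comm]; rfl
  have hpe : ∀ (x : ℝ) (j : Fin N), (p j).eval x = ∏ m ∈ Finset.univ.erase j, (x - b m) := by
    intro x j; simp [hp, eval_prod]
  have h1 : vandermonde a * S =
      Matrix.diagonal (fun i => ∏ m : Fin N, (a i - b m)) *
        Matrix.of (fun i j : Fin N => 1 / (a i - b j)) := by
    ext i j
    rw [Matrix.mul_apply]
    have : ∑ k : Fin N, vandermonde a i k * S k j = (p j).eval (a i) := by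
      rw [← heval (a i) j]; rfl
    rw [this, hpe, Matrix.diagonal_mul, Matrix.of_apply]
    rw [mul_one_div]
    rw [eq_div_iff (hab i j), ← Finset.prod_erase_mul _ _ (Finset.mem_univ j)]
  have h2 : vandermonde b * S =
      Matrix.diagonal (fun j => ∏ m ∈ Finset.univ.erase j, (b j - b m)) := by
    ext l j
    rw [Matrix.mul_apply]
    have : ∑ k : Fin N, vandermonde b l k * S k j = (p j).eval (b l) := by
      rw [← heval (b l) j]; rfl
    rw [this, hpe, Matrix.diagonal_apply]
    by_cases h : l = j
    · subst h; simp
    · rw [if_neg h, Finset.prod_eq_zero (Finset.mem_erase.2 ⟨h, Finset.mem_univ l⟩)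
        (sub_self (b l))]
  have hVb : (vandermonde b).det ≠ 0 := Matrix.det_vandermonde_ne_zero_iff.2 hb
  have hoff : (∏ j : Fin N, ∏ m ∈ Finset.univ.erase j, (b j - b m))
      = (∏ i : Fin N, ∏ j ∈ Finset.Ioi i, (b i - b j)) * (vandermonde b).det := by
    have key := Finset.prod_prod_Ioi_mul_eq_prod_prod_off_diag (fun j i : Fin N => b i - b j)
    have key2 : ∏ i : Fin N, ∏ j ∈ Finset.Ioi i, (b i - b j) * (b j - b i)
        = ∏ j : Fin N, ∏ m ∈ Finset.univ.erase j, (b j - b m) := by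
      rw [key]
      refine Finset.prod_congr rfl fun i _ => Finset.prod_congr ?_ fun _ _ => rfl
      ext m
      simp [eq_comm]
    calc (∏ j : Fin N, ∏ m ∈ Finset.univ.erase j, (b j - b m))
        = ∏ i : Fin N, ∏ j ∈ Finset.Ioi i, (b i - b j) * (b j - b i) := key2.symm
      _ = (∏ i : Fin N, ∏ j ∈ Finset.Ioi i, (b i - b j)) * (vandermonde b).det := by
          rw [Matrix.det_vandermonde]
          simp_rw [Finset.prod_mul_distrib]
  have hDa : (∏ i : Fin N, ∏ m : Fin N, (a i - b m)) ≠ 0 :=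
    Finset.prod_ne_zero_iff.2 fun i _ => Finset.prod_ne_zero_iff.2 fun m _ => hab i m
  have e1 : (vandermonde a).det * S.det
      = (∏ i : Fin N, ∏ m : Fin N, (a i - b m)) *
        (Matrix.of fun i j : Fin N => 1 / (a i - b j)).det := by
    rw [← Matrix.det_mul, h1, Matrix.det_mul, Matrix.det_diagonal]
  have e2 : (vandermonde b).det * S.det
      = (∏ i : Fin N, ∏ j ∈ Finset.Ioi i, (b i - b j)) * (vandermonde b).det := by
    rw [← Matrix.det_mul, h2, Matrix.det_diagonal, hoff]
  have hdetS : S.det = ∏ i : Fin N, ∏ j ∈ Finset.Ioi i, (b i - b j) :=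
    mul_left_cancel₀ hVb (e2.trans (mul_comm _ _))
  rw [eq_div_iff hDa]
  rw [Matrix.det_vandermonde] at e1
  simp_rw [Finset.prod_mul_distrib]
  rw [mul_comm, ← e1, hdetS]

/-- For `A = P diag(λ) P⁻¹` with distinct negative eigenvalues and `β = P⁻¹ b`,
the Gramian `G_∞ = ∫_0^∞ e^{At} b bᵀ e^{Aᵀ t} dt` satisfies
`det G_∞ = det(P)² det(M)` with the Cauchy-type matrix `M_{ij} = -β_i β_j/(λ_i + λ_j)`,
whose determinant is given by the Cauchy determinant formula. -/
theorem gramian_det_cauchy (n : ℕ) (lam : Fin n → ℝ)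
    (hinj : Function.Injective lam) (hneg : ∀ i, lam i < 0)
    (P : Matrix (Fin n) (Fin n) ℝ) (hP : IsUnit P)
    (A : Matrix (Fin n) (Fin n) ℝ) (hA : A = P * Matrix.diagonal lam * P⁻¹)
    (b : Fin n → ℝ) (beta : Fin n → ℝ) (hbeta : beta = P⁻¹.mulVec b) :
    (Matrix.of fun i j : Fin n => ∫ t in Set.Ioi (0 : ℝ),
        (NormedSpace.exp (t • A) * Matrix.vecMulVec b b
          * NormedSpace.exp (t • Aᵀ)) i j).det
      = P.det ^ 2 *
        (Matrix.of fun i j : Fin n => -(beta i * beta j) / (lam i + lam j)).det ∧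
    (Matrix.of fun i j : Fin n => -(beta i * beta j) / (lam i + lam j)).det
      = (∏ i : Fin n, beta i ^ 2) *
        (∏ i : Fin n, ∏ j ∈ Finset.univ.filter (fun j => i < j), (lam i - lam j) ^ 2) /
        ∏ i : Fin n, ∏ j : Fin n, (-(lam i + lam j)) := by
  have hsum : ∀ k l : Fin n, lam k + lam l < 0 := fun k l => by
    have := hneg k; have := hneg l; linarith
  -- Part one: the Gramian equals `P * M * Pᵀ`.
  have hexp : ∀ t : ℝ, NormedSpace.exp (t • A)
      = P * Matrix.diagonal (fun k => Real.exp (lam k * t)) * P⁻¹ := by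
    intro t
    have h1 : t • A = P * Matrix.diagonal (fun k => lam k * t) * P⁻¹ := by
      rw [hA, ← smul_mul_assoc, ← mul_smul_comm]
      congr 2
      ext i j
      by_cases h : i = j <;> simp [Matrix.diagonal_apply, h, mul_comm]
    rw [h1, Matrix.exp_conj P _ hP, Matrix.exp_diagonal]
    have hpi : NormedSpace.exp (fun k : Fin n => lam k * t)
        = fun k : Fin n => Real.exp (lam k * t) := by
      rw [Pi.exp_def]
      funext kk
      exact (congrFun Real.exp_eq_exp_ℝ _).symm
    rw [hpi]
  have hexpT : ∀ t : ℝ, NormedSpace.exp (t • Aᵀ) = (NormedSpace.exp (t • A))ᵀ := by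
    intro t
    rw [← Matrix.transpose_smul, Matrix.exp_transpose]
  have hmid : ∀ t : ℝ,
      NormedSpace.exp (t • A) * Matrix.vecMulVec b b * NormedSpace.exp (t • Aᵀ)
        = P * Matrix.vecMulVec (fun k => Real.exp (lam k * t) * beta k)
            (fun k => Real.exp (lam k * t) * beta k) * Pᵀ := by
    intro t
    rw [hexpT, my_mul_vecMulVec, my_vecMulVec_mul, Matrix.vecMul_transpose,
      my_mul_vecMulVec, my_vecMulVec_mul, Matrix.vecMul_transpose]
    have hDbeta : Matrix.diagonal (fun k => Real.exp (lam k * t)) *ᵥ beta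
        = fun k => Real.exp (lam k * t) * beta k := by
      funext kk
      simp [Matrix.mulVec_diagonal]
    have hvec : NormedSpace.exp (t • A) *ᵥ b
        = P *ᵥ (fun k => Real.exp (lam k * t) * beta k) := by
      rw [hexp, ← Matrix.mulVec_mulVec, ← Matrix.mulVec_mulVec, ← hbeta, hDbeta]
    rw [hvec]
  have hentry : ∀ (t : ℝ) (i j : Fin n),
      (NormedSpace.exp (t • A) * Matrix.vecMulVec b b * NormedSpace.exp (t • Aᵀ)) i j
        = ∑ k : Fin n, ∑ l : Fin n,
            (P i k * beta k * (P j l * beta l)) * Real.exp ((lam k + lam l) * t) := by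
    intro t i j
    rw [hmid t]
    simp only [Matrix.mul_apply, Matrix.vecMulVec_apply, Matrix.transpose_apply,
      Finset.sum_mul]
    rw [Finset.sum_comm]
    refine Finset.sum_congr rfl fun k _ => Finset.sum_congr rfl fun l _ => ?_
    rw [add_mul, Real.exp_add]
    ring
  have hintg : ∀ (k l i j : Fin n), Integrable
      (fun t => (P i k * beta k * (P j l * beta l)) * Real.exp ((lam k + lam l) * t))
      (volume.restrict (Set.Ioi 0)) :=
    fun k l i j => (integrableOn_exp_mul (hsum k l)).const_mul _
  have hint : ∀ i j : Fin n, (∫ t in Set.Ioi (0 : ℝ),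
      (NormedSpace.exp (t • A) * Matrix.vecMulVec b b * NormedSpace.exp (t • Aᵀ)) i j)
      = ∑ k : Fin n, ∑ l : Fin n,
          (P i k * beta k * (P j l * beta l)) * -(1 / (lam k + lam l)) := by
    intro i j
    simp_rw [hentry]
    rw [MeasureTheory.integral_finset_sum _
      (fun k _ => integrable_finset_sum _ (fun l _ => hintg k l i j))]
    refine Finset.sum_congr rfl fun k _ => ?_
    rw [MeasureTheory.integral_finset_sum _ (fun l _ => hintg k l i j)]
    refine Finset.sum_congr rfl fun l _ => ?_
    rw [integral_const_mul, my_integral_exp_mul_Ioi (hsum k l)]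
  have hG : (Matrix.of fun i j : Fin n => ∫ t in Set.Ioi (0 : ℝ),
      (NormedSpace.exp (t • A) * Matrix.vecMulVec b b * NormedSpace.exp (t • Aᵀ)) i j)
      = P * (Matrix.of fun i j : Fin n => -(beta i * beta j) / (lam i + lam j)) * Pᵀ := by
    ext i j
    rw [Matrix.of_apply, hint i j]
    simp only [Matrix.mul_apply, Matrix.transpose_apply, Matrix.of_apply, Finset.sum_mul]
    rw [Finset.sum_comm]
    refine Finset.sum_congr rfl fun l _ => Finset.sum_congr rfl fun k _ => ?_
    ring
  constructor
  · rw [hG, Matrix.det_mul, Matrix.det_mul, Matrix.det_transpose]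
    ring
  -- Part two: Cauchy determinant formula.
  · have hab : ∀ i j : Fin n, (fun i => -lam i) i - lam j ≠ 0 := by
      intro i j
      have := hsum i j
      intro h
      simp only at h
      linarith
    have hC := cauchy_det (fun i => -lam i) lam hinj hab
    have hM : (Matrix.of fun i j : Fin n => -(beta i * beta j) / (lam i + lam j))
        = Matrix.diagonal beta *
            (Matrix.of fun i j : Fin n => 1 / ((fun i => -lam i) i - lam j)) *
            Matrix.diagonal beta := by
      ext i j
      simp only [Matrix.mul_diagonal, Matrix.diagonal_mul, Matrix.of_apply]
      have hne : lam i + lam j ≠ 0 := (hsum i j).ne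
      have hne2 : -lam i - lam j ≠ 0 := hab i j
      field_simp
      ring
    have hIoi : ∀ i : Fin n, Finset.univ.filter (fun j => i < j) = Finset.Ioi i := by
      intro i; ext j; simp
    have hnum : (∏ i : Fin n, ∏ j ∈ Finset.Ioi i,
          (((fun i => -lam i) j - (fun i => -lam i) i) * (lam i - lam j)))
        = ∏ i : Fin n, ∏ j ∈ Finset.Ioi i, (lam i - lam j) ^ 2 := by
      refine Finset.prod_congr rfl fun i _ => Finset.prod_congr rfl fun j _ => ?_
      ring
    have hden : (∏ i : Fin n, ∏ j : Fin n, ((fun i => -lam i) i - lam j))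
        = ∏ i : Fin n, ∏ j : Fin n, (-(lam i + lam j)) := by
      refine Finset.prod_congr rfl fun i _ => Finset.prod_congr rfl fun j _ => ?_
      ring
    have hbeta2 : (∏ i : Fin n, beta i) * (∏ i : Fin n, beta i)
        = ∏ i : Fin n, beta i ^ 2 := by
      rw [← Finset.prod_mul_distrib]
      exact Finset.prod_congr rfl fun i _ => (sq (beta i)).symm
    simp_rw [hIoi]
    rw [hM, Matrix.det_mul, Matrix.det_mul, Matrix.det_diagonal, hC, hnum, hden, ← hbeta2]
    ring
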